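/- Let M ≥ 3 and let p, q, c0, c1 be real numbers. Let A be the M×M real symmetric matrix with A_{uv} = p for all u, v < M with u ≠ v, A_{uu} = p + c0 for u < M, A_{uM} = A_{Mu} = q for u < M, and A_{MM} = p + c1. Then the characteristic polynomial of A factors as det(X·I − A) = (X − c0)^{M−2} · (X² − (c0 + c1 + pM)·X + (c0·c1 + (M−1)·p·c1 + p·c0 + (M−1)·(p² − q²))). -/

import Mathlib

open Matrix Polynomial

/-- The matrix with entries `p` among the first `M−1` indices (with `p + c0`
on their diagonal), `q` in the last row and column off the corner, and
`p + c1` in the bottom-right corner. -/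
noncomputable def starNGMShape (M : ℕ) (p q c0 c1 : ℝ) :
    Matrix (Fin M) (Fin M) ℝ :=
  Matrix.of fun u v =>
    if u = v then (if (u : ℕ) = M - 1 then p + c1 else p + c0)
    else if (u : ℕ) = M - 1 ∨ (v : ℕ) = M - 1 then q else p

lemma sum_ite_last {F : Type*} [CommRing F] {M : ℕ} (hM : 1 ≤ M) (x y : F) :
    ∑ j : Fin M, (if (j : ℕ) = M - 1 then x else y) = x + ((M : F) - 1) * y := by
  classical
  have h : ∀ j : Fin M, ((j : ℕ) = M - 1) = (j = (⟨M - 1, by omega⟩ : Fin M)) := by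
    intro j; rw [eq_iff_iff, Fin.ext_iff]
  simp_rw [h]
  rw [Finset.sum_ite, Finset.sum_const, Finset.sum_const, Finset.filter_eq',
    if_pos (Finset.mem_univ _), Finset.card_singleton]
  have h2 : (Finset.filter (fun x : Fin M => ¬x = ⟨M - 1, by omega⟩) Finset.univ).card
      = M - 1 := by
    have h3 := Finset.filter_ne' (Finset.univ : Finset (Fin M)) ⟨M - 1, by omega⟩
    simp only [ne_eq] at h3
    rw [h3, Finset.card_erase_of_mem (Finset.mem_univ _), Finset.card_univ, Fintype.card_fin]
  rw [h2, one_smul, nsmul_eq_mul, Nat.cast_sub hM]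
  push_cast
  ring

set_option maxHeartbeats 1000000 in
/-- Characteristic polynomial of the star-shaped next-generation-matrix
structure: `det(X·I − A) = (X − c0)^{M−2} · (X² − (c0+c1+pM)·X +
(c0c1 + (M−1)pc1 + pc0 + (M−1)(p²−q²)))`. -/
theorem starNGMShape_charpoly (M : ℕ) (hM : 3 ≤ M) (p q c0 c1 : ℝ) :
    (starNGMShape M p q c0 c1).charpoly
      = (X - C c0) ^ (M - 2) *
        (X ^ 2 - C (c0 + c1 + p * (M : ℝ)) * X
          + C (c0 * c1 + ((M : ℝ) - 1) * p * c1 + p * c0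
              + ((M : ℝ) - 1) * (p ^ 2 - q ^ 2))) := by
  classical
  set A := starNGMShape M p q c0 c1 with hA
  let F := FractionRing ℝ[X]
  let φ : ℝ[X] →+* F := algebraMap ℝ[X] F
  have hinj : Function.Injective φ := IsFractionRing.injective ℝ[X] F
  apply hinj
  let ψ : ℝ →+* F := φ.comp (C : ℝ →+* ℝ[X])
  let t : F := φ X
  set s : F := t - ψ c0 with hsdef
  have hs : s ≠ 0 := by
    have h1 : s = φ (X - C c0) := by rw [map_sub]; rfl
    rw [h1]
    intro h
    exact X_sub_C_ne_zero c0 (hinj (by rw [h, map_zero]))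
  -- the rank-2 factors
  let W : Matrix (Fin M) (Fin 2) F := Matrix.of fun i a =>
    if a = 0 then (if (i : ℕ) = M - 1 then 0 else 1)
    else (if (i : ℕ) = M - 1 then 1 else 0)
  let K : Matrix (Fin 2) (Fin M) F := Matrix.of fun a j =>
    if a = 0 then (if (j : ℕ) = M - 1 then ψ q else ψ p)
    else (if (j : ℕ) = M - 1 then ψ (p + c1 - c0) else ψ q)
  have hdecomp : (charmatrix A).map φ = s • (1 : Matrix (Fin M) (Fin M) F) - W * K := by
    ext i j
    have hWK : (W * K) i j = W i 0 * K 0 j + W i 1 * K 1 j := by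
      rw [Matrix.mul_apply, Fin.sum_univ_two]
    by_cases hij : i = j
    · subst hij
      rw [Matrix.map_apply, charmatrix_apply_eq, Matrix.sub_apply, Matrix.smul_apply,
        Matrix.one_apply_eq, smul_eq_mul, mul_one, hWK]
      by_cases hi : (i : ℕ) = M - 1
      · have hAii : A i i = p + c1 := by simp [hA, starNGMShape, hi]
        rw [hAii, map_sub]
        have h0 : W i 0 = 0 := by simp [W, hi]
        have h1 : W i 1 = 1 := by simp [W, hi]
        have h2 : K 1 i = ψ (p + c1 - c0) := by simp [K, hi]
        rw [h0, h1, h2, hsdef]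
        have : ψ (p + c1) = ψ p + ψ c1 := map_add ψ p c1
        have h3 : ψ (p + c1 - c0) = ψ p + ψ c1 - ψ c0 := by
          rw [map_sub, map_add]
        rw [h3]
        show t - ψ (p + c1) = _
        rw [this]; ring
      · have hAii : A i i = p + c0 := by simp [hA, starNGMShape, hi]
        rw [hAii, map_sub]
        have h0 : W i 0 = 1 := by simp [W, hi]
        have h1 : W i 1 = 0 := by simp [W, hi]
        have h2 : K 0 i = ψ p := by simp [K, hi]
        rw [h0, h1, h2, hsdef]
        show t - ψ (p + c0) = _
        rw [map_add]; ring
    · rw [Matrix.map_apply, charmatrix_apply_ne _ _ _ hij, Matrix.sub_apply,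
        Matrix.smul_apply, Matrix.one_apply_ne hij, smul_eq_mul, mul_zero, hWK]
      by_cases hi : (i : ℕ) = M - 1
      · by_cases hj : (j : ℕ) = M - 1
        · exact absurd (Fin.ext (by omega)) hij
        · have hAij : A i j = q := by simp [hA, starNGMShape, hij, hi]
          have h0 : W i 0 = 0 := by simp [W, hi]
          have h1 : W i 1 = 1 := by simp [W, hi]
          have h2 : K 1 j = ψ q := by simp [K, hj]
          rw [hAij, h0, h1, h2, map_neg]
          show -(ψ q) = _
          ring
      · have h0 : W i 0 = 1 := by simp [W, hi]
        have h1 : W i 1 = 0 := by simp [W, hi]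
        by_cases hj : (j : ℕ) = M - 1
        · have hAij : A i j = q := by simp [hA, starNGMShape, hij, hj]
          have h2 : K 0 j = ψ q := by simp [K, hj]
          rw [hAij, h0, h1, h2, map_neg]
          show -(ψ q) = _
          ring
        · have hAij : A i j = p := by simp [hA, starNGMShape, hij, hi, hj]
          have h2 : K 0 j = ψ p := by simp [K, hj]
          rw [hAij, h0, h1, h2, map_neg]
          show -(ψ p) = _
          ring
  have hM1 : 1 ≤ M := by omega
  -- entries of K * W
  have e00 : (K * W) 0 0 = ((M : F) - 1) * ψ p := by
    rw [Matrix.mul_apply]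
    have h : ∀ j : Fin M, K 0 j * W j 0 = (if (j : ℕ) = M - 1 then 0 else ψ p) := by
      intro j; by_cases hj : (j : ℕ) = M - 1 <;> simp [K, W, hj]
    simp_rw [h]
    rw [sum_ite_last hM1]; ring
  have e01 : (K * W) 0 1 = ψ q := by
    rw [Matrix.mul_apply]
    have h : ∀ j : Fin M, K 0 j * W j 1 = (if (j : ℕ) = M - 1 then ψ q else 0) := by
      intro j; by_cases hj : (j : ℕ) = M - 1 <;> simp [K, W, hj]
    simp_rw [h]
    rw [sum_ite_last hM1]; ring
  have e10 : (K * W) 1 0 = ((M : F) - 1) * ψ q := by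
    rw [Matrix.mul_apply]
    have h : ∀ j : Fin M, K 1 j * W j 0 = (if (j : ℕ) = M - 1 then 0 else ψ q) := by
      intro j; by_cases hj : (j : ℕ) = M - 1 <;> simp [K, W, hj]
    simp_rw [h]
    rw [sum_ite_last hM1]; ring
  have e11 : (K * W) 1 1 = ψ p + ψ c1 - ψ c0 := by
    rw [Matrix.mul_apply]
    have h : ∀ j : Fin M, K 1 j * W j 1 =
        (if (j : ℕ) = M - 1 then ψ p + ψ c1 - ψ c0 else 0) := by
      intro j
      by_cases hj : (j : ℕ) = M - 1 <;> simp [K, W, hj, map_sub, map_add]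
    simp_rw [h]
    rw [sum_ite_last hM1]; ring
  -- left-hand side
  have hφL : φ A.charpoly = s ^ M * Matrix.det (1 - (s⁻¹ • K) * W) := by
    rw [Matrix.charpoly, RingHom.map_det, RingHom.mapMatrix_apply, hdecomp,
      ← Matrix.det_one_sub_mul_comm]
    have h1 : s • (1 : Matrix (Fin M) (Fin M) F) - W * K
        = s • (1 - W * (s⁻¹ • K)) := by
      rw [smul_sub, Matrix.mul_smul, smul_smul, mul_inv_cancel₀ hs, one_smul]
    rw [h1, Matrix.det_smul, Fintype.card_fin]
  have hdet2 : Matrix.det (1 - (s⁻¹ • K) * W)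
      = 1 - s⁻¹ * (((M : F) - 1) * ψ p + (ψ p + ψ c1 - ψ c0))
        + s⁻¹ * s⁻¹ * (((M : F) - 1) * ψ p * (ψ p + ψ c1 - ψ c0)
          - ψ q * (((M : F) - 1) * ψ q)) := by
    rw [Matrix.smul_mul, Matrix.det_fin_two]
    simp only [Matrix.sub_apply, Matrix.smul_apply, Matrix.one_apply_eq,
      Matrix.one_apply_ne (show (0 : Fin 2) ≠ 1 by decide),
      Matrix.one_apply_ne (show (1 : Fin 2) ≠ 0 by decide),
      e00, e01, e10, e11, smul_eq_mul]
    ring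
  rw [hφL, hdet2]
  -- right-hand side
  have hφX : φ X = t := rfl
  have hφC : ∀ r : ℝ, φ (C r) = ψ r := fun r => rfl
  simp only [_root_.map_mul, _root_.map_add, map_sub, map_pow, _root_.map_one,
    map_natCast, hφX, hφC, ← hsdef]
  obtain ⟨m, rfl⟩ : ∃ m, M = m + 3 := ⟨M - 3, by omega⟩
  have hpow : s ^ (m + 3) = s ^ (m + 3 - 2) * s ^ 2 := by
    rw [← pow_add]
    congr 1
  rw [hpow, mul_assoc]
  congr 1
  have ht : t = s + ψ c0 := by rw [hsdef]; ring
  rw [ht]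
  push_cast
  have hu : s * s⁻¹ = 1 := mul_inv_cancel₀ hs
  linear_combination (-s * ((↑m + 3 - 1) * ψ p + (ψ p + ψ c1 - ψ c0))
    + ((↑m + 3 - 1) * ψ p * (ψ p + ψ c1 - ψ c0) - ψ q * ((↑m + 3 - 1) * ψ q)) * (s * s⁻¹ + 1)) * hu
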